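/- Let ρ̃₁ ∈ ℂ^{d₁×d₁} with all diagonal entries summing to 1, and let ρ₁ be a density matrix on ℂ^{d₁} (so its diagonal entries also sum to 1). Then for any matrices ρ̃₂, ρ₂ ∈ ℂ^{d₂×d₂}, ‖ρ̃₂ − ρ₂‖ ≤ √(d₁) · ‖ρ̃₁ ⊗ ρ̃₂ − ρ₁ ⊗ ρ₂‖, where ‖·‖ is the Frobenius norm. -/

import Mathlib

open Matrix
open scoped Kronecker

/-- Frobenius norm of a complex matrix. -/
noncomputable def frobNorm {m n : Type*} [Fintype m] [Fintype n] (M : Matrix m n ℂ) : ℝ :=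
  Real.sqrt (∑ i, ∑ j, ‖M i j‖ ^ 2)

/-- If the diagonal entries of `ρ̃₁` and of `ρ₁` each sum to `1`, then for any
matrices `ρ̃₂`, `ρ₂`, `‖ρ̃₂ − ρ₂‖ ≤ √(d₁) ‖ρ̃₁ ⊗ ρ̃₂ − ρ₁ ⊗ ρ₂‖`. -/
theorem frobNorm_sub_le_sqrt_mul_kron {d₁ d₂ : ℕ}
    (ρt₁ ρ₁ : Matrix (Fin d₁) (Fin d₁) ℂ)
    (hρt₁ : ∑ i, ρt₁ i i = 1) (hρ₁ : ∑ i, ρ₁ i i = 1)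
    (ρt₂ ρ₂ : Matrix (Fin d₂) (Fin d₂) ℂ) :
    frobNorm (ρt₂ - ρ₂) ≤ Real.sqrt d₁ * frobNorm (ρt₁ ⊗ₖ ρt₂ - ρ₁ ⊗ₖ ρ₂) := by
  set K : Matrix (Fin d₁ × Fin d₂) (Fin d₁ × Fin d₂) ℂ := ρt₁ ⊗ₖ ρt₂ - ρ₁ ⊗ₖ ρ₂
  set S : ℝ := ∑ p, ∑ q, ‖K p q‖ ^ 2 with hS
  have hSnn : 0 ≤ S := by positivity
  -- the sum over diagonal blocks is at most S
  have hdiag : ∑ i : Fin d₁, ∑ j, ∑ k,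
      ‖ρt₁ i i * ρt₂ j k - ρ₁ i i * ρ₂ j k‖ ^ 2 ≤ S := by
    rw [hS]
    simp only [K, Fintype.sum_prod_type, Matrix.sub_apply, Matrix.kroneckerMap_apply]
    refine Finset.sum_le_sum fun i _ => Finset.sum_le_sum fun j _ => ?_
    exact Finset.single_le_sum (f := fun i' => ∑ k,
      ‖ρt₁ i i' * ρt₂ j k - ρ₁ i i' * ρ₂ j k‖ ^ 2)
      (fun i' _ => by positivity) (Finset.mem_univ i)
  -- pointwise Cauchy–Schwarz
  have key : ∑ j, ∑ k, ‖(ρt₂ - ρ₂) j k‖ ^ 2 ≤ d₁ * S := by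
    have hstep : ∀ j k, ‖(ρt₂ - ρ₂) j k‖ ^ 2 ≤
        d₁ * ∑ i : Fin d₁, ‖ρt₁ i i * ρt₂ j k - ρ₁ i i * ρ₂ j k‖ ^ 2 := by
      intro j k
      have hsum : (ρt₂ - ρ₂) j k = ∑ i : Fin d₁, (ρt₁ i i * ρt₂ j k - ρ₁ i i * ρ₂ j k) := by
        simp [Finset.sum_sub_distrib, ← Finset.sum_mul, hρt₁, hρ₁]
      rw [hsum]
      calc ‖∑ i : Fin d₁, (ρt₁ i i * ρt₂ j k - ρ₁ i i * ρ₂ j k)‖ ^ 2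
          ≤ (∑ i : Fin d₁, ‖ρt₁ i i * ρt₂ j k - ρ₁ i i * ρ₂ j k‖) ^ 2 := by
            apply pow_le_pow_left₀ (by positivity)
            exact norm_sum_le _ _
        _ ≤ ↑(Finset.univ : Finset (Fin d₁)).card *
            ∑ i : Fin d₁, ‖ρt₁ i i * ρt₂ j k - ρ₁ i i * ρ₂ j k‖ ^ 2 :=
            sq_sum_le_card_mul_sum_sq
        _ = d₁ * ∑ i : Fin d₁, ‖ρt₁ i i * ρt₂ j k - ρ₁ i i * ρ₂ j k‖ ^ 2 := by
            simp
    calc ∑ j, ∑ k, ‖(ρt₂ - ρ₂) j k‖ ^ 2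
        ≤ ∑ j, ∑ k, (d₁ : ℝ) * ∑ i : Fin d₁,
            ‖ρt₁ i i * ρt₂ j k - ρ₁ i i * ρ₂ j k‖ ^ 2 := by
          exact Finset.sum_le_sum fun j _ => Finset.sum_le_sum fun k _ => hstep j k
      _ = d₁ * ∑ j, ∑ k, ∑ i : Fin d₁,
            ‖ρt₁ i i * ρt₂ j k - ρ₁ i i * ρ₂ j k‖ ^ 2 := by
          simp_rw [← Finset.mul_sum]
      _ = d₁ * ∑ i : Fin d₁, ∑ j, ∑ k,
            ‖ρt₁ i i * ρt₂ j k - ρ₁ i i * ρ₂ j k‖ ^ 2 := by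
          congr 1
          calc ∑ j, ∑ k, ∑ i : Fin d₁,
                ‖ρt₁ i i * ρt₂ j k - ρ₁ i i * ρ₂ j k‖ ^ 2
              = ∑ j, ∑ i : Fin d₁, ∑ k,
                ‖ρt₁ i i * ρt₂ j k - ρ₁ i i * ρ₂ j k‖ ^ 2 :=
                Finset.sum_congr rfl fun _ _ => Finset.sum_comm
            _ = _ := Finset.sum_comm
      _ ≤ d₁ * S := mul_le_mul_of_nonneg_left hdiag (by positivity)
  unfold frobNorm
  rw [← Real.sqrt_mul (by positivity : (0:ℝ) ≤ (d₁:ℝ))]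
  exact Real.sqrt_le_sqrt key
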